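/- Let c₂, c₄ be real constants with (c₂, c₄) ≠ (0, 0), and define f : ℝ → ℝ by f(x) = x·(c₂·e^{x/√2} + c₄·e^{−x/√2}). Then f satisfies f''''(x) − f''(x) + (1/4)·f(x) = 0 for all x ∈ ℝ, but f does not satisfy the equation f''(x) = (1/2)·f(x) for all x: there exists x ∈ ℝ with f''(x) ≠ (1/2)·f(x). -/

import Mathlib

private lemma key_deriv (p q r t : ℝ) :
    deriv (fun x : ℝ => (p + q * x) * Real.exp (x / Real.sqrt 2)
        + (r + t * x) * Real.exp (-x / Real.sqrt 2))
    = fun x : ℝ => ((q + p / Real.sqrt 2) + (q / Real.sqrt 2) * x) * Real.exp (x / Real.sqrt 2)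
        + ((t - r / Real.sqrt 2) + (-(t / Real.sqrt 2)) * x) * Real.exp (-x / Real.sqrt 2) := by
  funext x
  have hE : HasDerivAt (fun y : ℝ => Real.exp (y / Real.sqrt 2))
      (Real.exp (x / Real.sqrt 2) * (1 / Real.sqrt 2)) x :=
    ((hasDerivAt_id x).div_const (Real.sqrt 2)).exp
  have hF : HasDerivAt (fun y : ℝ => Real.exp (-y / Real.sqrt 2))
      (Real.exp (-x / Real.sqrt 2) * (-1 / Real.sqrt 2)) x := by
    simpa using (((hasDerivAt_id x).neg.div_const (Real.sqrt 2)).exp)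
  have hP : HasDerivAt (fun y : ℝ => p + q * y) q x := by
    simpa using ((hasDerivAt_id x).const_mul q).const_add p
  have hT : HasDerivAt (fun y : ℝ => r + t * y) t x := by
    simpa using ((hasDerivAt_id x).const_mul t).const_add r
  have hD : HasDerivAt (fun x : ℝ => (p + q * x) * Real.exp (x / Real.sqrt 2)
        + (r + t * x) * Real.exp (-x / Real.sqrt 2)) _ x := (hP.mul hE).add (hT.mul hF)
  rw [hD.deriv]
  field_simp
  ring

theorem stmt_14 (c₂ c₄ : ℝ) (hc : (c₂, c₄) ≠ (0, 0)) (f : ℝ → ℝ)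
    (hf : f = fun x =>
      x * (c₂ * Real.exp (x / Real.sqrt 2) + c₄ * Real.exp (-x / Real.sqrt 2))) :
    (∀ x : ℝ, iteratedDeriv 4 f x - iteratedDeriv 2 f x + (1 / 4) * f x = 0) ∧
    (∃ x : ℝ, iteratedDeriv 2 f x ≠ (1 / 2) * f x) := by
  have h0 : f = fun x : ℝ => (0 + c₂ * x) * Real.exp (x / Real.sqrt 2)
      + (0 + c₄ * x) * Real.exp (-x / Real.sqrt 2) := by
    rw [hf]; funext x; ring
  have hss : Real.sqrt 2 * Real.sqrt 2 = 2 := Real.mul_self_sqrt (by norm_num)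
  have hs0 : Real.sqrt 2 ≠ 0 := by positivity
  constructor
  · intro x
    simp only [iteratedDeriv_succ, iteratedDeriv_zero]
    rw [h0, key_deriv, key_deriv, key_deriv, key_deriv]
    simp only []
    have e2 : (Real.sqrt 2) ^ 2 = 2 := Real.sq_sqrt (by norm_num)
    have e7 : (Real.sqrt 2) ^ 7 = 8 * Real.sqrt 2 := by
      rw [show (Real.sqrt 2) ^ 7 = ((Real.sqrt 2) ^ 2) ^ 3 * Real.sqrt 2 by ring, e2]; norm_num
    have e8 : (Real.sqrt 2) ^ 8 = 16 := by
      rw [show (8 : ℕ) = 2 * 4 from rfl, pow_mul, e2]; norm_num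
    have e9 : (Real.sqrt 2) ^ 9 = 16 * Real.sqrt 2 := by
      rw [show (9 : ℕ) = 2 * 4 + 1 from rfl, pow_succ, pow_mul, e2]; norm_num
    have e10 : (Real.sqrt 2) ^ 10 = 32 := by
      rw [show (10 : ℕ) = 2 * 5 from rfl, pow_mul, e2]; norm_num
    field_simp
    ring_nf
    have e3 : (Real.sqrt 2) ^ 3 = 2 * Real.sqrt 2 := by
      rw [show (Real.sqrt 2) ^ 3 = (Real.sqrt 2) ^ 2 * Real.sqrt 2 by ring, e2]
    have e4 : (Real.sqrt 2) ^ 4 = 4 := by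
      rw [show (Real.sqrt 2) ^ 4 = ((Real.sqrt 2) ^ 2) ^ 2 by ring, e2]; norm_num
    simp only [e2, e3, e4]
    ring
  · have hD2 : ∀ x : ℝ, iteratedDeriv 2 f x - (1 / 2) * f x
        = Real.sqrt 2 * (c₂ * Real.exp (x / Real.sqrt 2) - c₄ * Real.exp (-x / Real.sqrt 2)) := by
      intro x
      simp only [iteratedDeriv_succ, iteratedDeriv_zero]
      rw [h0, key_deriv, key_deriv]
      simp only []
      field_simp
      ring_nf
      have e2 : (Real.sqrt 2) ^ 2 = 2 := Real.sq_sqrt (by norm_num)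
      have e3 : (Real.sqrt 2) ^ 3 = 2 * Real.sqrt 2 := by
        rw [show (3 : ℕ) = 2 * 1 + 1 from rfl, pow_succ, pow_mul, e2]; norm_num
      have e4 : (Real.sqrt 2) ^ 4 = 4 := by
        rw [show (4 : ℕ) = 2 * 2 from rfl, pow_mul, e2]; norm_num
      have e5 : (Real.sqrt 2) ^ 5 = 4 * Real.sqrt 2 := by
        rw [show (5 : ℕ) = 2 * 2 + 1 from rfl, pow_succ, pow_mul, e2]; norm_num
      simp only [e2, e3, e4, e5]
      ring
    obtain ⟨x0, hx0⟩ : ∃ x : ℝ,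
        c₂ * Real.exp (x / Real.sqrt 2) - c₄ * Real.exp (-x / Real.sqrt 2) ≠ 0 := by
      by_cases h : c₂ = c₄
      · have hc2 : c₂ ≠ 0 := by
          intro h0
          exact hc (by rw [Prod.mk.injEq]; exact ⟨h0, h ▸ h0⟩)
        refine ⟨1, ?_⟩
        rw [← h, ← mul_sub]
        refine mul_ne_zero hc2 (sub_ne_zero_of_ne (ne_of_gt ?_))
        have hpos : 0 < 1 / Real.sqrt 2 := by positivity
        exact Real.exp_lt_exp.2 (by rw [neg_div]; linarith)
      · exact ⟨0, by simpa using sub_ne_zero_of_ne h⟩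
    refine ⟨x0, fun hEq => hx0 ?_⟩
    have := hD2 x0
    rw [hEq, sub_self] at this
    exact (mul_eq_zero.1 this.symm).resolve_left hs0
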